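/- Fix positive integers r, m with 1 ≤ r ≤ m−2. For each prime p, let Λ_p := limsup_{e→∞} (c_{p,r,m,e})^{1/e}. Then Λ_p is finite and positive for all sufficiently large primes p, and log Λ_p / log p tends to m−1 as p tends to infinity through the primes. (Equivalently, the Frobenius complexity of the determinantal ring S_{m,n} obtained from the 2×2 minors of an m×n matrix of indeterminates, where n = m−r, tends to m−1 as p → ∞.) -/

import Mathlib

/-- `cSeq p r m e` is the number of `m`-tuples `(a_1,…,a_m)` of natural numbers with
`a_1+⋯+a_m = r(p^e−1)` such that `(a_1 mod p^i)+⋯+(a_m mod p^i) ≥ r(p^i−1)+p^i`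
for every `1 ≤ i ≤ e−1`; this is the `e`-th term of the complexity sequence of
the ring `T(V_r(K[x_1,…,x_m]))` of Enescu–Yao. -/
noncomputable def cSeq (p r m e : ℕ) : ℕ :=
  Nat.card {a : Fin m → ℕ // (∑ j, a j = r * (p ^ e - 1)) ∧
    ∀ i, 1 ≤ i → i ≤ e - 1 → r * (p ^ i - 1) + p ^ i ≤ ∑ j, a j % p ^ i}


/-- `Lam r m p` is `Λ_p = limsup_{e→∞} (c_{p,r,m,e})^{1/e}`, the complexity of the
ring `T(V_r(K[x_1,…,x_m]))` in characteristic `p`. -/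
noncomputable def Lam (r m p : ℕ) : ℝ :=
  Filter.limsup (fun e : ℕ => (cSeq p r m e : ℝ) ^ ((e : ℝ)⁻¹)) Filter.atTop

section Helpers
open Finset Filter

lemma digit_lt (p : ℕ) (hp : 1 ≤ p) (d : ℕ → ℕ) (hd : ∀ k, d k ≤ p - 1) (i : ℕ) :
    (∑ k ∈ range i, d k * p ^ k) + 1 ≤ p ^ i := by
  induction i with
  | zero => simp
  | succ i ih =>
    rw [Finset.sum_range_succ]
    have hA : 1 ≤ p ^ i := Nat.one_le_pow _ _ hp
    have h2 : d i * p ^ i ≤ (p - 1) * p ^ i := Nat.mul_le_mul_right _ (hd i)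
    have h3 : (p - 1) * p ^ i = p ^ (i + 1) - p ^ i := by
      rw [Nat.sub_mul, one_mul, pow_succ, mul_comm]
    have h4 : p ^ i ≤ p ^ (i + 1) := Nat.pow_le_pow_right hp (by omega)
    omega

lemma digit_mod (p n i : ℕ) (hp : 1 ≤ p) (d : ℕ → ℕ) (hd : ∀ k, d k ≤ p - 1)
    (hi : i ≤ n) :
    (∑ k ∈ range n, d k * p ^ k) % p ^ i = ∑ k ∈ range i, d k * p ^ k := by
  have hsplit : (∑ k ∈ range n, d k * p ^ k)
      = (∑ k ∈ range i, d k * p ^ k) + ∑ k ∈ Ico i n, d k * p ^ k := by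
    rw [range_eq_Ico, range_eq_Ico]; exact (Finset.sum_Ico_consecutive (fun k => d k * p ^ k) (Nat.zero_le i) hi).symm
  have hdvd : p ^ i ∣ ∑ k ∈ Ico i n, d k * p ^ k := by
    refine Finset.dvd_sum ?_
    intro k hk
    exact Dvd.dvd.mul_left (pow_dvd_pow p (Finset.mem_Ico.mp hk).1) _
  obtain ⟨c, hc⟩ := hdvd
  rw [hsplit, hc, Nat.add_mul_mod_self_left, Nat.mod_eq_of_lt]
  have := digit_lt p hp d hd i
  omega

def c0 (q r j : ℕ) : ℕ := if j ≤ r then q + 1 else if j = r + 1 then 1 else 0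
def cE (q r' j : ℕ) : ℕ := if j = 0 then q else if j < r' + 1 then q + 1 else 0
def colF (q r' E m1 : ℕ) (g : ℕ → ℕ → ℕ) (k j : ℕ) : ℕ :=
  if k = 0 then c0 q (r' + 1) j
  else if k = E + 1 then cE q r' j
  else if j < m1 then g (k - 1) j
  else (r' + 2) * (q + 1) - ∑ j' ∈ range m1, g (k - 1) j'
def aF (q r' E m1 : ℕ) (g : ℕ → ℕ → ℕ) (j : ℕ) : ℕ :=
  ∑ k ∈ range (E + 2), colF q r' E m1 g k j * (q + 2) ^ k
def sCol (q r' E k : ℕ) : ℕ :=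
  if k = 0 then (r' + 1) * (q + 1) + (q + 2)
  else if k = E + 1 then r' * (q + 1) + q
  else (r' + 2) * (q + 1)

lemma sum_c0 (q r' M : ℕ) (h : r' ≤ M) :
    ∑ j ∈ range (M + 3), c0 q (r' + 1) j = (r' + 1) * (q + 1) + (q + 2) := by
  have hsplit : ∑ j ∈ range (M + 3), c0 q (r' + 1) j
      = ∑ j ∈ range (r' + 3), c0 q (r' + 1) j + ∑ j ∈ Ico (r' + 3) (M + 3), c0 q (r' + 1) j := by
    rw [range_eq_Ico, range_eq_Ico]; exact (Finset.sum_Ico_consecutive (c0 q (r' + 1)) (Nat.zero_le _) (by omega)).symm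
  have h2 : ∑ j ∈ Ico (r' + 3) (M + 3), c0 q (r' + 1) j = 0 := by
    refine Finset.sum_eq_zero fun j hj => ?_
    have := (Finset.mem_Ico.mp hj).1
    simp only [c0, if_neg (by omega : ¬ j ≤ r' + 1), if_neg (by omega : ¬ j = r' + 1 + 1)]
  have h3 : ∑ j ∈ range (r' + 2), c0 q (r' + 1) j = (r' + 2) * (q + 1) := by
    rw [Finset.sum_congr rfl (fun j hj => ?_), Finset.sum_const, card_range, smul_eq_mul]
    have := Finset.mem_range.mp hj
    exact if_pos (by omega)
  rw [hsplit, h2, Finset.sum_range_succ, h3]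
  norm_num [c0]
  ring

lemma sum_cE (q r' M : ℕ) (h : r' ≤ M) :
    ∑ j ∈ range (M + 3), cE q r' j = r' * (q + 1) + q := by
  have hsplit : ∑ j ∈ range (M + 3), cE q r' j
      = ∑ j ∈ range (r' + 1), cE q r' j + ∑ j ∈ Ico (r' + 1) (M + 3), cE q r' j := by
    rw [range_eq_Ico, range_eq_Ico]; exact (Finset.sum_Ico_consecutive (cE q r') (Nat.zero_le _) (by omega)).symm
  have h2 : ∑ j ∈ Ico (r' + 1) (M + 3), cE q r' j = 0 := by
    refine Finset.sum_eq_zero fun j hj => ?_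
    have := (Finset.mem_Ico.mp hj).1
    simp only [cE, if_neg (by omega : ¬ j = 0), if_neg (by omega : ¬ j < r' + 1)]
  rw [hsplit, h2, Finset.sum_range_succ']
  have h3 : ∑ j ∈ range r', cE q r' (j + 1) = r' * (q + 1) := by
    rw [Finset.sum_congr rfl (fun j hj => ?_), Finset.sum_const, card_range, smul_eq_mul]
    have := Finset.mem_range.mp hj
    simp only [cE, if_neg (by omega : ¬ j + 1 = 0), if_pos (by omega : j + 1 < r' + 1)]
  rw [h3]
  simp [cE]

lemma construction (q r' M E : ℕ) (hrM : r' ≤ M) (g : ℕ → ℕ → ℕ)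
    (G1 : ∀ k j, j < M + 2 → g k j ≤ q + 1)
    (G2 : ∀ k, (r' + 1) * (q + 1) ≤ ∑ j ∈ range (M + 2), g k j)
    (G3 : ∀ k, ∑ j ∈ range (M + 2), g k j ≤ (r' + 2) * (q + 1)) :
    (∑ j ∈ range (M + 3), aF q r' E (M + 2) g j = (r' + 1) * ((q + 2) ^ (E + 2) - 1)) ∧
    (∀ i, 1 ≤ i → i ≤ E + 1 →
      ∑ j ∈ range (M + 3), aF q r' E (M + 2) g j % (q + 2) ^ i
        = (r' + 1) * ((q + 2) ^ i - 1) + (q + 2) ^ i) ∧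
    (∀ k, k < E → ∀ j, j < M + 2 →
      (aF q r' E (M + 2) g j % (q + 2) ^ (k + 2) - aF q r' E (M + 2) g j % (q + 2) ^ (k + 1))
        / (q + 2) ^ (k + 1) = g k j) := by
  have hexp : (r' + 2) * (q + 1) = (r' + 1) * (q + 1) + (q + 1) := by ring
  have hcol : ∀ k j, colF q r' E (M + 2) g k j ≤ q + 1 := by
    intro k j
    unfold colF c0 cE
    split_ifs with h1 h2 h3 h4 h5 h6
    · omega
    · omega
    · omega
    · omega
    · omega
    · omega
    · exact G1 _ _ (by assumption)
    · have := G2 (k - 1); omega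
  have hdig : ∀ j k, colF q r' E (M + 2) g k j ≤ (q + 2) - 1 := by
    intro j k; have := hcol k j; omega
  have hmod : ∀ j i, i ≤ E + 2 → aF q r' E (M + 2) g j % (q + 2) ^ i
      = ∑ k ∈ range i, colF q r' E (M + 2) g k j * (q + 2) ^ k :=
    fun j i hi => digit_mod (q + 2) (E + 2) i (by omega) _ (hdig j) hi
  have hsum : ∀ k, k < E + 2 →
      ∑ j ∈ range (M + 3), colF q r' E (M + 2) g k j = sCol q r' E k := by
    intro k hk
    rcases eq_or_ne k 0 with rfl | h0
    · simp only [colF, if_pos rfl, sCol, if_pos rfl]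
      exact sum_c0 q r' M hrM
    rcases eq_or_ne k (E + 1) with rfl | hE
    · simp only [colF, if_neg h0, if_pos rfl, sCol, if_neg h0, if_pos rfl]
      exact sum_cE q r' M hrM
    have key : ∑ j ∈ range (M + 3), colF q r' E (M + 2) g k j
        = ∑ j ∈ range (M + 2), g (k - 1) j
          + ((r' + 2) * (q + 1) - ∑ j' ∈ range (M + 2), g (k - 1) j') := by
      rw [Finset.sum_range_succ]
      congr 1
      · refine Finset.sum_congr rfl fun j hj => ?_
        have := mem_range.mp hj
        simp only [colF, if_neg h0, if_neg hE, if_pos this]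
      · simp only [colF, if_neg h0, if_neg hE, if_neg (lt_irrefl (M + 2))]
    rw [key]
    simp only [sCol, if_neg h0, if_neg hE]
    have := G3 (k - 1); omega
  have hS : ∀ i, 1 ≤ i → i ≤ E + 1 →
      (∑ k ∈ range i, sCol q r' E k * (q + 2) ^ k) + (r' + 1) = (r' + 2) * (q + 2) ^ i := by
    refine Nat.le_induction ?_ ?_
    · intro _
      rw [Finset.sum_range_one]
      norm_num [sCol]
      ring
    · intro i hi IH h
      have IH' := IH (by omega)
      rw [Finset.sum_range_succ]
      have hmid : sCol q r' E i = (r' + 2) * (q + 1) := by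
        simp only [sCol, if_neg (by omega : ¬ i = 0), if_neg (by omega : ¬ i = E + 1)]
      rw [hmid]
      calc ∑ k ∈ range i, sCol q r' E k * (q + 2) ^ k + (r' + 2) * (q + 1) * (q + 2) ^ i + (r' + 1)
          = (∑ k ∈ range i, sCol q r' E k * (q + 2) ^ k + (r' + 1))
            + (r' + 2) * (q + 1) * (q + 2) ^ i := by ring
        _ = (r' + 2) * (q + 2) ^ i + (r' + 2) * (q + 1) * (q + 2) ^ i := by rw [IH']
        _ = (r' + 2) * ((q + 2) ^ i * (q + 2)) := by ring
        _ = (r' + 2) * (q + 2) ^ (i + 1) := by rw [← pow_succ]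
  have hT : (∑ k ∈ range (E + 2), sCol q r' E k * (q + 2) ^ k) + (r' + 1)
      = (r' + 1) * (q + 2) ^ (E + 2) := by
    rw [Finset.sum_range_succ]
    have hEv : sCol q r' E (E + 1) = r' * (q + 1) + q := by
      norm_num [sCol]
    have h1 := hS (E + 1) (by omega) (le_refl _)
    rw [hEv]
    calc ∑ k ∈ range (E + 1), sCol q r' E k * (q + 2) ^ k
          + (r' * (q + 1) + q) * (q + 2) ^ (E + 1) + (r' + 1)
        = (∑ k ∈ range (E + 1), sCol q r' E k * (q + 2) ^ k + (r' + 1))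
          + (r' * (q + 1) + q) * (q + 2) ^ (E + 1) := by ring
      _ = (r' + 2) * (q + 2) ^ (E + 1) + (r' * (q + 1) + q) * (q + 2) ^ (E + 1) := by rw [h1]
      _ = (r' + 1) * ((q + 2) ^ (E + 1) * (q + 2)) := by ring
      _ = (r' + 1) * (q + 2) ^ (E + 2) := by rw [← pow_succ]
  have hswap : ∀ i, i ≤ E + 2 →
      ∑ j ∈ range (M + 3), ∑ k ∈ range i, colF q r' E (M + 2) g k j * (q + 2) ^ k
        = ∑ k ∈ range i, sCol q r' E k * (q + 2) ^ k := by
    intro i hi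
    rw [Finset.sum_comm]
    refine Finset.sum_congr rfl fun k hk => ?_
    rw [← Finset.sum_mul, hsum k (lt_of_lt_of_le (mem_range.mp hk) hi)]
  refine ⟨?_, ?_, ?_⟩
  · have h1 : ∑ j ∈ range (M + 3), aF q r' E (M + 2) g j
        = ∑ k ∈ range (E + 2), sCol q r' E k * (q + 2) ^ k := by
      unfold aF; exact hswap (E + 2) (le_refl _)
    have hpow : 1 ≤ (q + 2) ^ (E + 2) := Nat.one_le_pow _ _ (by omega)
    have hconv : (r' + 1) * ((q + 2) ^ (E + 2) - 1) + (r' + 1) = (r' + 1) * (q + 2) ^ (E + 2) := by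
      calc (r' + 1) * ((q + 2) ^ (E + 2) - 1) + (r' + 1)
          = (r' + 1) * ((q + 2) ^ (E + 2) - 1 + 1) := by ring
        _ = (r' + 1) * (q + 2) ^ (E + 2) := by rw [Nat.sub_add_cancel hpow]
    omega
  · intro i hi1 hi2
    have h1 : ∑ j ∈ range (M + 3), aF q r' E (M + 2) g j % (q + 2) ^ i
        = ∑ k ∈ range i, sCol q r' E k * (q + 2) ^ k := by
      rw [Finset.sum_congr rfl fun j _ => hmod j i (by omega)]
      exact hswap i (by omega)
    have h2 := hS i hi1 hi2
    have hpow : 1 ≤ (q + 2) ^ i := Nat.one_le_pow _ _ (by omega)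
    have hconv : (r' + 1) * ((q + 2) ^ i - 1) + (q + 2) ^ i + (r' + 1)
        = (r' + 2) * (q + 2) ^ i := by
      calc (r' + 1) * ((q + 2) ^ i - 1) + (q + 2) ^ i + (r' + 1)
          = (r' + 1) * ((q + 2) ^ i - 1 + 1) + (q + 2) ^ i := by ring
        _ = (r' + 1) * (q + 2) ^ i + (q + 2) ^ i := by rw [Nat.sub_add_cancel hpow]
        _ = (r' + 2) * (q + 2) ^ i := by ring
    omega
  · intro k hk j hj
    rw [hmod j (k + 2) (by omega), hmod j (k + 1) (by omega), Finset.sum_range_succ,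
      Nat.add_sub_cancel_left]
    have hcolv : colF q r' E (M + 2) g (k + 1) j = g k j := by
      simp only [colF, if_neg (by omega : ¬ k + 1 = 0), if_neg (by omega : ¬ k + 1 = E + 1),
        if_pos hj, Nat.add_sub_cancel]
    rw [hcolv]
    exact Nat.mul_div_cancel _ (Nat.pow_pos (by omega))

def baseD (q r' M : ℕ) : ℕ := ((r' + 1) * (q + 1) + (M + 1)) / (M + 2)
def ttD (q M : ℕ) : ℕ := (q - M) / (M + 2) + 1

lemma lower_div (a b : ℕ) (hb : 0 < b) : a < b * (a / b) + b := by
  conv_lhs => rw [← Nat.div_add_mod a b]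
  exact Nat.add_lt_add_left (Nat.mod_lt _ hb) _

lemma kfacts (q r' M : ℕ) (hrM : r' ≤ M) (hq : 2 * M + 4 ≤ q) :
    ((r' + 1) * (q + 1) ≤ (M + 2) * baseD q r' M) ∧
    ((M + 2) * (baseD q r' M + (ttD q M - 1)) ≤ (r' + 2) * (q + 1)) ∧
    (baseD q r' M + (ttD q M - 1) ≤ q + 1) ∧
    (q + 2 ≤ 2 * (M + 3) * ttD q M) := by
  have hM2 : 0 < M + 2 := by omega
  set A := (r' + 1) * (q + 1) with hA
  set T := (q - M) / (M + 2) with hT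
  set B := baseD q r' M with hB
  have htt : ttD q M = T + 1 := by rw [ttD]
  have htt1 : ttD q M - 1 = T := by rw [htt, Nat.add_sub_cancel]
  have hBdef : B = (A + (M + 1)) / (M + 2) := by rw [hB, baseD]
  have hTa : (M + 2) * T ≤ q - M := by
    rw [hT, mul_comm]; exact Nat.div_mul_le_self _ _
  have hTb : q - M < (M + 2) * T + (M + 2) := lower_div _ _ hM2
  have hBa : (M + 2) * B ≤ A + (M + 1) := by
    rw [hBdef, mul_comm]; exact Nat.div_mul_le_self _ _
  have hBb : A + (M + 1) < (M + 2) * B + (M + 2) := by rw [hBdef]; exact lower_div _ _ hM2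
  have k1 : A ≤ (M + 2) * B := by omega
  have hdist : (M + 2) * (B + T) = (M + 2) * B + (M + 2) * T := by ring
  have hsum : (r' + 2) * (q + 1) = A + (q + 1) := by rw [hA]; ring
  have k5 : (M + 2) * (B + T) ≤ (r' + 2) * (q + 1) := by omega
  have k6 : B + T ≤ q + 1 := by
    have hle : (r' + 2) * (q + 1) ≤ (M + 2) * (q + 1) :=
      Nat.mul_le_mul_right _ (by omega)
    have hmul : (M + 2) * (B + T) ≤ (M + 2) * (q + 1) := le_trans k5 hle
    exact Nat.le_of_mul_le_mul_left hmul hM2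
  have k7 : q + 2 ≤ 2 * (M + 3) * ttD q M := by
    rw [htt]
    have h1 : 2 * (M + 3) * (T + 1) = 2 * (M + 3) * T + 2 * (M + 3) := by ring
    have h2 : 2 * ((M + 2) * T) ≤ 2 * (M + 3) * T := by
      have h3 : (2 * (M + 2)) * T ≤ (2 * (M + 3)) * T := Nat.mul_le_mul_right _ (by omega)
      have h4 : 2 * ((M + 2) * T) = (2 * (M + 2)) * T := by ring
      omega
    omega
  rw [htt1]
  exact ⟨k1, k5, k6, k7⟩

lemma sol_finite (m N : ℕ) (P : (Fin m → ℕ) → Prop) :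
    Finite {a : Fin m → ℕ // (∑ j, a j = N) ∧ P a} := by
  refine Finite.of_injective (fun x => (fun j => (⟨x.1 j, ?_⟩ : Fin (N + 1)))) ?_
  · have h := Finset.single_le_sum (f := x.1) (fun i _ => Nat.zero_le _) (Finset.mem_univ j)
    have := x.2.1
    omega
  · intro x y h
    apply Subtype.ext
    funext j
    have := congrFun h j
    simpa using this

lemma cSeq_lower (q r' M E : ℕ) (hrM : r' ≤ M) (hq : 2 * M + 4 ≤ q) :
    ttD q M ^ ((M + 2) * E) ≤ cSeq (q + 2) (r' + 1) (M + 3) (E + 2) := by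
  obtain ⟨k1, k5, k6, k7⟩ := kfacts q r' M hrM hq
  set t := ttD q M with htdef
  set b := baseD q r' M with hbdef
  have ht1 : 1 ≤ t := by rw [htdef, ttD]; exact Nat.le_add_left 1 _
  unfold cSeq
  haveI : Finite {a : Fin (M + 3) → ℕ //
      (∑ j, a j = (r' + 1) * ((q + 2) ^ (E + 2) - 1)) ∧
      ∀ i, 1 ≤ i → i ≤ E + 2 - 1 →
        (r' + 1) * ((q + 2) ^ i - 1) + (q + 2) ^ i ≤ ∑ j, a j % (q + 2) ^ i} :=
    sol_finite _ _ _
  set gmap : (Fin E → Fin (M + 2) → Fin t) → ℕ → ℕ → ℕ :=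
    fun f k j => b + (if h : k < E ∧ j < M + 2 then (f ⟨k, h.1⟩ ⟨j, h.2⟩ : ℕ) else 0)
    with hgmap
  have hgub : ∀ f k j, gmap f k j ≤ b + (t - 1) := by
    intro f k j
    have : (if h : k < E ∧ j < M + 2 then (f ⟨k, h.1⟩ ⟨j, h.2⟩ : ℕ) else 0) ≤ t - 1 := by
      split
      · have := (f ⟨k, by omega⟩ ⟨j, by omega⟩).isLt
        exact Nat.le_sub_one_of_lt (Fin.is_lt _)
      · omega
    simp only [hgmap]
    exact Nat.add_le_add_left this b
  have hglb : ∀ f k j, b ≤ gmap f k j := fun f k j => Nat.le_add_right _ _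
  have hG1 : ∀ f k j, j < M + 2 → gmap f k j ≤ q + 1 := by
    intro f k j _
    exact le_trans (hgub f k j) k6
  have hG2 : ∀ f k, (r' + 1) * (q + 1) ≤ ∑ j ∈ Finset.range (M + 2), gmap f k j := by
    intro f k
    calc (r' + 1) * (q + 1) ≤ (M + 2) * b := k1
      _ = ∑ _j ∈ Finset.range (M + 2), b := by
          rw [Finset.sum_const, Finset.card_range, smul_eq_mul]
      _ ≤ ∑ j ∈ Finset.range (M + 2), gmap f k j :=
          Finset.sum_le_sum fun j _ => hglb f k j
  have hG3 : ∀ f k, ∑ j ∈ Finset.range (M + 2), gmap f k j ≤ (r' + 2) * (q + 1) := by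
    intro f k
    calc ∑ j ∈ Finset.range (M + 2), gmap f k j
        ≤ ∑ _j ∈ Finset.range (M + 2), (b + (t - 1)) :=
          Finset.sum_le_sum fun j _ => hgub f k j
      _ = (M + 2) * (b + (t - 1)) := by
          rw [Finset.sum_const, Finset.card_range, smul_eq_mul]
      _ ≤ (r' + 2) * (q + 1) := k5
  have hcons := fun f => construction q r' M E hrM (gmap f) (hG1 f) (hG2 f) (hG3 f)
  set Φ : (Fin E → Fin (M + 2) → Fin t) →
      {a : Fin (M + 3) → ℕ //
        (∑ j, a j = (r' + 1) * ((q + 2) ^ (E + 2) - 1)) ∧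
        ∀ i, 1 ≤ i → i ≤ E + 2 - 1 →
          (r' + 1) * ((q + 2) ^ i - 1) + (q + 2) ^ i ≤ ∑ j, a j % (q + 2) ^ i} :=
    fun f => ⟨fun j => aF q r' E (M + 2) (gmap f) (j : ℕ), by
      constructor
      · rw [Fin.sum_univ_eq_sum_range]
        exact (hcons f).1
      · intro i h1 h2
        rw [Fin.sum_univ_eq_sum_range (fun j => aF q r' E (M + 2) (gmap f) j % (q + 2) ^ i)]
        exact le_of_eq ((hcons f).2.1 i h1 (by omega)).symm⟩
    with hΦ
  have hinj : Function.Injective Φ := by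
    intro f f' h
    have hval := congrArg Subtype.val h
    simp only [hΦ] at hval
    have happ : ∀ jj : ℕ, jj < M + 3 →
        aF q r' E (M + 2) (gmap f) jj = aF q r' E (M + 2) (gmap f') jj := by
      intro jj hjj
      exact congrFun hval ⟨jj, hjj⟩
    funext k j
    have hc := (hcons f).2.2 k.val k.isLt j.val j.isLt
    have hc' := (hcons f').2.2 k.val k.isLt j.val j.isLt
    rw [happ j.val (by omega)] at hc
    have hg : gmap f k.val j.val = gmap f' k.val j.val := by rw [← hc, ← hc']
    simp only [hgmap, dif_pos (And.intro k.isLt j.isLt), Fin.eta] at hg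
    exact Fin.val_injective (Nat.add_left_cancel hg)
  calc t ^ ((M + 2) * E)
      = Nat.card (Fin E → Fin (M + 2) → Fin t) := by
        simp [Nat.card_eq_fintype_card, Fintype.card_fun, ← pow_mul, mul_comm]
    _ ≤ _ := Nat.card_le_card_of_injective Φ hinj

lemma cSeq_upper (p r M e : ℕ) : cSeq p r (M + 1) e ≤ (r * (p ^ e - 1) + 1) ^ M := by
  unfold cSeq
  set N := r * (p ^ e - 1) with hN
  haveI : Finite {a : Fin (M + 1) → ℕ // (∑ j, a j = N) ∧
      ∀ i, 1 ≤ i → i ≤ e - 1 → r * (p ^ i - 1) + p ^ i ≤ ∑ j, a j % p ^ i} :=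
    sol_finite _ _ _
  set χ : {a : Fin (M + 1) → ℕ // (∑ j, a j = N) ∧
      ∀ i, 1 ≤ i → i ≤ e - 1 → r * (p ^ i - 1) + p ^ i ≤ ∑ j, a j % p ^ i} →
      (Fin M → Fin (N + 1)) := fun x j => ⟨x.1 j.castSucc, by
    refine Nat.lt_succ_of_le ?_
    have h := Finset.single_le_sum (f := x.1) (fun i _ => Nat.zero_le _)
      (Finset.mem_univ j.castSucc)
    rw [x.2.1] at h
    exact h⟩ with hχ
  have hinj : Function.Injective χ := by
    intro x y h
    apply Subtype.ext; funext j
    have hcomp : ∀ j' : Fin M, x.1 j'.castSucc = y.1 j'.castSucc := by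
      intro j'
      have := congrFun h j'
      simpa [hχ] using this
    have hsx := x.2.1
    have hsy := y.2.1
    rw [Fin.sum_univ_castSucc] at hsx hsy
    have hsum : ∑ i : Fin M, x.1 i.castSucc = ∑ i : Fin M, y.1 i.castSucc :=
      Finset.sum_congr rfl fun i _ => hcomp i
    have hlast : x.1 (Fin.last M) = y.1 (Fin.last M) := by omega
    induction j using Fin.lastCases with
    | last => exact hlast
    | cast i => exact hcomp i
  calc Nat.card _ ≤ Nat.card (Fin M → Fin (N + 1)) := Nat.card_le_card_of_injective χ hinj
    _ = (N + 1) ^ M := by simp [Nat.card_eq_fintype_card, Fintype.card_fun]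

lemma lower_bridge (r m p e : ℕ) (hr : 1 ≤ r) (hrm : r + 2 ≤ m) (hp : 2 * m ≤ p)
    (he : 2 ≤ e) : ttD (p - 2) (m - 3) ^ ((m - 1) * (e - 2)) ≤ cSeq p r m e := by
  obtain ⟨M, rfl⟩ : ∃ M, m = M + 3 := ⟨m - 3, by omega⟩
  obtain ⟨r', rfl⟩ : ∃ r', r = r' + 1 := ⟨r - 1, by omega⟩
  obtain ⟨q, rfl⟩ : ∃ q, p = q + 2 := ⟨p - 2, by omega⟩
  obtain ⟨E, rfl⟩ : ∃ E, e = E + 2 := ⟨e - 2, by omega⟩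
  have h1 : q + 2 - 2 = q := by omega
  have h2 : M + 3 - 3 = M := by omega
  have h3 : M + 3 - 1 = M + 2 := by omega
  have h4 : E + 2 - 2 = E := by omega
  rw [h1, h2, h3, h4]
  exact cSeq_lower q r' M E (by omega) (by omega)

lemma tq_big (m p : ℕ) (hm : 3 ≤ m) (hp : 2 * m ≤ p) :
    p ≤ 2 * m * ttD (p - 2) (m - 3) := by
  obtain ⟨M, rfl⟩ : ∃ M, m = M + 3 := ⟨m - 3, by omega⟩
  obtain ⟨q, rfl⟩ : ∃ q, p = q + 2 := ⟨p - 2, by omega⟩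
  have h1 : q + 2 - 2 = q := by omega
  have h2 : M + 3 - 3 = M := by omega
  rw [h1, h2]
  exact (kfacts q 0 M (by omega) (by omega)).2.2.2

lemma perp (r m p : ℕ) (hr : 1 ≤ r) (hrm : r + 2 ≤ m) (hp : 2 * m ≤ p) :
    (1 ≤ Lam r m p) ∧
    ((p : ℝ) / (2 * m)) ^ (m - 1) ≤ Lam r m p ∧
    Lam r m p ≤ (p : ℝ) ^ (m - 1) ∧
    Filter.IsBoundedUnder (· ≤ ·) Filter.atTop
      (fun e : ℕ => (cSeq p r m e : ℝ) ^ ((e : ℝ)⁻¹)) := by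
  have hm3 : 3 ≤ m := by omega
  have hp2 : 2 ≤ p := by omega
  set f : ℕ → ℝ := fun e => (cSeq p r m e : ℝ) ^ ((e : ℝ)⁻¹) with hf
  set t := ttD (p - 2) (m - 3) with ht
  have htq : p ≤ 2 * m * t := tq_big m p hm3 hp
  have ht1 : 1 ≤ t := by rw [ht, ttD]; exact Nat.le_add_left 1 _
  set L : ℕ := t ^ (m - 1) with hLdef
  have hL1 : 1 ≤ L := Nat.one_le_pow _ _ (by omega)
  -- natural number bounds
  have hlowN : ∀ e, 2 ≤ e → L ^ (e - 2) ≤ cSeq p r m e := by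
    intro e he
    have h := lower_bridge r m p e hr hrm hp he
    rwa [pow_mul] at h
  have hupN : ∀ e, cSeq p r m e ≤ (r * p ^ e) ^ (m - 1) := by
    intro e
    have h1 : cSeq p r m e ≤ (r * (p ^ e - 1) + 1) ^ (m - 1) := by
      obtain ⟨M, hM⟩ : ∃ M, m = M + 1 := ⟨m - 1, by omega⟩
      subst hM
      simpa using cSeq_upper p r M e
    refine le_trans h1 (Nat.pow_le_pow_left ?_ _)
    have hpe : 1 ≤ p ^ e := Nat.one_le_pow _ _ (by omega)
    have h2 : r * (p ^ e - 1) + r = r * p ^ e := by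
      calc r * (p ^ e - 1) + r = r * ((p ^ e - 1) + 1) := by ring
        _ = r * p ^ e := by rw [Nat.sub_add_cancel hpe]
    omega
  -- real preliminaries
  have hf0 : ∀ e, 0 ≤ f e := fun e => Real.rpow_nonneg (Nat.cast_nonneg _) _
  have hfbb : IsBoundedUnder (· ≥ ·) atTop f := isBoundedUnder_of ⟨0, fun e => hf0 e⟩
  have hC0 : (0:ℝ) ≤ ((m - 1 : ℕ) : ℝ) := Nat.cast_nonneg _
  have hr1 : (1 : ℝ) ≤ (r : ℝ) := by exact_mod_cast hr
  have hp0 : (0 : ℝ) < (p : ℝ) := by positivity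
  have hP0 : (0:ℝ) < (p : ℝ) ^ (m - 1) := by positivity
  -- upper pointwise bound
  have hu_le : ∀ e : ℕ, 1 ≤ e →
      f e ≤ (r : ℝ) ^ (((m - 1 : ℕ) : ℝ) * (e : ℝ)⁻¹) * (p : ℝ) ^ (m - 1) := by
    intro e he
    have he0 : ((e : ℝ)) ≠ 0 := by positivity
    have h1 : (cSeq p r m e : ℝ) ≤ ((r : ℝ) * (p : ℝ) ^ e) ^ (m - 1) := by
      have := hupN e
      calc (cSeq p r m e : ℝ) ≤ (((r * p ^ e) ^ (m - 1) : ℕ) : ℝ) := by exact_mod_cast this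
        _ = ((r : ℝ) * (p : ℝ) ^ e) ^ (m - 1) := by push_cast; ring
    have h2 : f e ≤ (((r : ℝ) * (p : ℝ) ^ e) ^ (m - 1)) ^ ((e : ℝ)⁻¹) :=
      Real.rpow_le_rpow (Nat.cast_nonneg _) h1 (by positivity)
    refine le_trans h2 (le_of_eq ?_)
    have hx0 : (0:ℝ) ≤ (r : ℝ) * (p : ℝ) ^ e := by positivity
    have hee : ((e : ℝ)) * (((m - 1 : ℕ) : ℝ) * (e : ℝ)⁻¹) = ((m - 1 : ℕ) : ℝ) := by
      field_simp
    calc (((r : ℝ) * (p : ℝ) ^ e) ^ (m - 1)) ^ ((e : ℝ)⁻¹)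
        = (((r : ℝ) * (p : ℝ) ^ e) ^ (((m - 1 : ℕ) : ℝ))) ^ ((e : ℝ)⁻¹) := by
          rw [Real.rpow_natCast]
      _ = ((r : ℝ) * (p : ℝ) ^ e) ^ (((m - 1 : ℕ) : ℝ) * (e : ℝ)⁻¹) := by
          rw [← Real.rpow_mul hx0]
      _ = (r : ℝ) ^ (((m - 1 : ℕ) : ℝ) * (e : ℝ)⁻¹)
            * ((p : ℝ) ^ e) ^ (((m - 1 : ℕ) : ℝ) * (e : ℝ)⁻¹) :=
          Real.mul_rpow (by positivity) (by positivity)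
      _ = (r : ℝ) ^ (((m - 1 : ℕ) : ℝ) * (e : ℝ)⁻¹) * (p : ℝ) ^ (m - 1) := by
          rw [← Real.rpow_natCast (p : ℝ) e, ← Real.rpow_mul (le_of_lt hp0), hee,
            Real.rpow_natCast]
  -- tendsto of the upper sequence
  have hexp0 : Tendsto (fun e : ℕ => ((m - 1 : ℕ) : ℝ) * (e : ℝ)⁻¹) atTop (nhds 0) := by
    have h := tendsto_inv_atTop_zero.comp (tendsto_natCast_atTop_atTop (R := ℝ))
    have := h.const_mul ((m - 1 : ℕ) : ℝ)
    simpa using this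
  have hcr : ContinuousAt (fun x : ℝ => (r : ℝ) ^ x) 0 :=
    Real.continuousAt_const_rpow (by positivity)
  have htendu : Tendsto
      (fun e : ℕ => (r : ℝ) ^ (((m - 1 : ℕ) : ℝ) * (e : ℝ)⁻¹) * (p : ℝ) ^ (m - 1))
      atTop (nhds ((p : ℝ) ^ (m - 1))) := by
    have h1 : Tendsto (fun e : ℕ => (r : ℝ) ^ (((m - 1 : ℕ) : ℝ) * (e : ℝ)⁻¹))
        atTop (nhds 1) := by
      have := hcr.tendsto.comp hexp0
      simpa [Real.rpow_zero, Function.comp_def] using this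
    have := h1.mul_const ((p : ℝ) ^ (m - 1))
    simpa using this
  -- boundedness of f
  have hfub : ∀ e : ℕ, f e ≤ max 1 ((r : ℝ) ^ (m - 1) * (p : ℝ) ^ (m - 1)) := by
    intro e
    match e with
    | 0 => 
      have : f 0 = 1 := by
        rw [hf]; simp
      rw [this]; exact le_max_left _ _
    | Nat.succ e' =>
      refine le_trans (hu_le (e' + 1) (by omega)) (le_trans ?_ (le_max_right _ _))
      have h1 : (r : ℝ) ^ (((m - 1 : ℕ) : ℝ) * ((e' + 1 : ℕ) : ℝ)⁻¹)
          ≤ (r : ℝ) ^ (((m - 1 : ℕ) : ℝ)) := by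
        refine Real.rpow_le_rpow_of_exponent_le hr1 ?_
        have h2 : ((e' + 1 : ℕ) : ℝ)⁻¹ ≤ 1 := by
          rw [inv_le_one_iff₀]
          right
          exact_mod_cast Nat.one_le_iff_ne_zero.mpr (by omega)
        calc ((m - 1 : ℕ) : ℝ) * ((e' + 1 : ℕ) : ℝ)⁻¹ ≤ ((m - 1 : ℕ) : ℝ) * 1 :=
              mul_le_mul_of_nonneg_left h2 hC0
          _ = ((m - 1 : ℕ) : ℝ) := mul_one _
      have h3 : (r : ℝ) ^ (((m - 1 : ℕ) : ℝ)) = (r : ℝ) ^ (m - 1) := Real.rpow_natCast _ _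
      rw [← h3]
      exact mul_le_mul_of_nonneg_right h1 (le_of_lt hP0)
  have hbu : IsBoundedUnder (· ≤ ·) atTop f := isBoundedUnder_of ⟨_, hfub⟩
  -- limsup upper bound
  have hΛub : Lam r m p ≤ (p : ℝ) ^ (m - 1) := by
    have h1 : f ≤ᶠ[atTop]
        (fun e : ℕ => (r : ℝ) ^ (((m - 1 : ℕ) : ℝ) * (e : ℝ)⁻¹) * (p : ℝ) ^ (m - 1)) := by
      filter_upwards [eventually_ge_atTop 1] with e he using hu_le e he
    have h2 := Filter.limsup_le_limsup h1 hfbb.isCoboundedUnder_le htendu.isBoundedUnder_le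
    rw [htendu.limsup_eq] at h2
    exact h2
  -- lower sequence
  set g : ℕ → ℝ := fun e => (L : ℝ) ^ (((e - 2 : ℕ) : ℝ) * (e : ℝ)⁻¹) with hg
  have hL0 : (0 : ℝ) < (L : ℝ) := by exact_mod_cast hL1
  have hg_le : ∀ e : ℕ, 2 ≤ e → g e ≤ f e := by
    intro e he
    have h1 : ((L ^ (e - 2) : ℕ) : ℝ) ≤ (cSeq p r m e : ℝ) := by exact_mod_cast hlowN e he
    have h2 : (((L ^ (e - 2) : ℕ) : ℝ)) ^ ((e : ℝ)⁻¹) ≤ f e :=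
      Real.rpow_le_rpow (Nat.cast_nonneg _) h1 (by positivity)
    refine le_trans (le_of_eq ?_) h2
    show (L : ℝ) ^ (((e - 2 : ℕ) : ℝ) * (e : ℝ)⁻¹) = ((L ^ (e - 2) : ℕ) : ℝ) ^ ((e : ℝ)⁻¹)
    have hc : ((L ^ (e - 2) : ℕ) : ℝ) = ((L : ℝ)) ^ (((e - 2 : ℕ)) : ℝ) := by
      rw [Real.rpow_natCast]; push_cast; ring
    rw [hc]
    exact Real.rpow_mul (le_of_lt hL0) _ _
  have hgexp : Tendsto (fun e : ℕ => ((e - 2 : ℕ) : ℝ) * (e : ℝ)⁻¹) atTop (nhds 1) := by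
    have h1 : Tendsto (fun e : ℕ => 1 - 2 * (e : ℝ)⁻¹) atTop (nhds 1) := by
      have h2 := (tendsto_inv_atTop_zero.comp (tendsto_natCast_atTop_atTop (R := ℝ))).const_mul 2
      have h3 : Tendsto (fun _ : ℕ => (1 : ℝ)) atTop (nhds 1) := tendsto_const_nhds
      have := h3.sub h2
      simpa using this
    refine Tendsto.congr' ?_ h1
    filter_upwards [eventually_ge_atTop 2] with e he
    have he0 : ((e : ℝ)) ≠ 0 := by
      have : (2 : ℝ) ≤ (e : ℝ) := by exact_mod_cast he
      linarith
    rw [Nat.cast_sub he]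
    field_simp
    norm_num
  have htendg : Tendsto g atTop (nhds (L : ℝ)) := by
    have hcL : ContinuousAt (fun x : ℝ => (L : ℝ) ^ x) 1 :=
      Real.continuousAt_const_rpow (ne_of_gt hL0)
    have := hcL.tendsto.comp hgexp
    simpa [Real.rpow_one, Function.comp_def] using this
  have hΛlb : (L : ℝ) ≤ Lam r m p := by
    have h1 : g ≤ᶠ[atTop] f := by
      filter_upwards [eventually_ge_atTop 2] with e he using hg_le e he
    have h2 : liminf g atTop ≤ liminf f atTop :=
      Filter.liminf_le_liminf h1 htendg.isBoundedUnder_ge hbu.isCoboundedUnder_ge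
    rw [htendg.liminf_eq] at h2
    exact le_trans h2 (Filter.liminf_le_limsup hbu hfbb)
  -- conclude
  have h1L : (1 : ℝ) ≤ (L : ℝ) := by exact_mod_cast hL1
  have hm0 : (0 : ℝ) < 2 * (m : ℝ) := by positivity
  have hptt : (p : ℝ) / (2 * m) ≤ (t : ℝ) := by
    rw [div_le_iff₀ hm0]
    have : (p : ℝ) ≤ ((2 * m * t : ℕ) : ℝ) := by exact_mod_cast htq
    push_cast at this
    linarith
  have hlow2 : ((p : ℝ) / (2 * m)) ^ (m - 1) ≤ (L : ℝ) := by
    have : ((p : ℝ) / (2 * m)) ^ (m - 1) ≤ (t : ℝ) ^ (m - 1) :=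
      pow_le_pow_left₀ (by positivity) hptt _
    calc ((p : ℝ) / (2 * m)) ^ (m - 1) ≤ (t : ℝ) ^ (m - 1) := this
      _ = (L : ℝ) := by rw [hLdef]; push_cast; ring
  exact ⟨le_trans h1L hΛlb, le_trans hlow2 hΛlb, hΛub, hbu⟩


end Helpers

/-- for `1 ≤ r ≤ m−2`, the complexity `Λ_p` is finite (the sequence
is bounded) and positive for all sufficiently large primes `p`, and
`log Λ_p / log p → m−1` as `p → ∞` through the primes.  Equivalently, the
Frobenius complexity of the determinantal ring `S_{m,n}` (with `n = m−r`)
tends to `m−1` as `p → ∞`. -/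
theorem stmt_19 (r m : ℕ) (hr : 1 ≤ r) (hrm : r ≤ m - 2) :
    (∀ᶠ p : ℕ in Filter.atTop ⊓ Filter.principal {p : ℕ | p.Prime},
      0 < Lam r m p ∧
      Filter.IsBoundedUnder (· ≤ ·) Filter.atTop
        (fun e : ℕ => (cSeq p r m e : ℝ) ^ ((e : ℝ)⁻¹))) ∧
    Filter.Tendsto (fun p : ℕ => Real.log (Lam r m p) / Real.log p)
      (Filter.atTop ⊓ Filter.principal {p : ℕ | p.Prime})
      (nhds ((m : ℝ) - 1)) := by
  have hm3 : 3 ≤ m := by omega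
  have hrm' : r + 2 ≤ m := by omega
  have hcast : ((m - 1 : ℕ) : ℝ) = (m : ℝ) - 1 := by
    have h1 : (1 : ℕ) ≤ m := by omega
    push_cast [Nat.cast_sub h1]
    ring
  have hev : ∀ᶠ p : ℕ in Filter.atTop ⊓ Filter.principal {p : ℕ | p.Prime}, 2 * m ≤ p :=
    Filter.Eventually.filter_mono inf_le_left (Filter.eventually_ge_atTop (2 * m))
  constructor
  · filter_upwards [hev] with p hp
    obtain ⟨h1, _, _, h4⟩ := perp r m p hr hrm' hp
    exact ⟨lt_of_lt_of_le one_pos h1, h4⟩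
  · -- squeeze
    set φ : ℕ → ℝ := fun p =>
      ((m - 1 : ℕ) : ℝ) - ((m - 1 : ℕ) : ℝ) * Real.log (2 * m) / Real.log p with hφ
    have htφ : Filter.Tendsto φ Filter.atTop (nhds ((m : ℝ) - 1)) := by
      have hlog : Filter.Tendsto (fun p : ℕ => Real.log p) Filter.atTop Filter.atTop :=
        Real.tendsto_log_atTop.comp tendsto_natCast_atTop_atTop
      have hdiv : Filter.Tendsto
          (fun p : ℕ => ((m - 1 : ℕ) : ℝ) * Real.log (2 * m) / Real.log p)
          Filter.atTop (nhds 0) :=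
        Filter.Tendsto.div_atTop tendsto_const_nhds hlog
      have h2 : Filter.Tendsto (fun _ : ℕ => ((m - 1 : ℕ) : ℝ)) Filter.atTop
          (nhds ((m - 1 : ℕ) : ℝ)) := tendsto_const_nhds
      have h3' := h2.sub hdiv
      rw [sub_zero] at h3'
      rw [hφ, ← hcast]
      exact h3'
    have hbounds : ∀ p : ℕ, 2 * m ≤ p →
        φ p ≤ Real.log (Lam r m p) / Real.log p ∧
        Real.log (Lam r m p) / Real.log p ≤ (m : ℝ) - 1 := by
      intro p hp
      obtain ⟨h1, h2, h3, _⟩ := perp r m p hr hrm' hp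
      have hΛpos : 0 < Lam r m p := lt_of_lt_of_le one_pos h1
      have hp1 : (1 : ℝ) < (p : ℝ) := by
        have : 6 ≤ p := by omega
        exact_mod_cast (by omega : 1 < p)
      have hlogp : 0 < Real.log p := Real.log_pos hp1
      have hm0 : (0 : ℝ) < 2 * (m : ℝ) := by positivity
      have hpdiv : (0 : ℝ) < (p : ℝ) / (2 * m) := by positivity
      constructor
      · have hkey : ((m - 1 : ℕ) : ℝ) * (Real.log p - Real.log (2 * m))
            ≤ Real.log (Lam r m p) := by
          have e1 : Real.log ((p : ℝ) / (2 * m)) = Real.log p - Real.log (2 * m) :=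
            Real.log_div (by positivity) (by positivity)
          calc ((m - 1 : ℕ) : ℝ) * (Real.log p - Real.log (2 * m))
              = ((m - 1 : ℕ) : ℝ) * Real.log ((p : ℝ) / (2 * m)) := by rw [e1]
            _ = Real.log (((p : ℝ) / (2 * m)) ^ (m - 1)) := (Real.log_pow _ _).symm
            _ ≤ Real.log (Lam r m p) := Real.log_le_log (by positivity) h2
        have heq : φ p = (((m - 1 : ℕ) : ℝ) * (Real.log p - Real.log (2 * m)))
            / Real.log p := by
          rw [hφ]
          field_simp
        rw [heq]
        gcongr
      · rw [div_le_iff₀ hlogp]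
        calc Real.log (Lam r m p) ≤ Real.log ((p : ℝ) ^ (m - 1)) :=
              Real.log_le_log hΛpos h3
          _ = ((m - 1 : ℕ) : ℝ) * Real.log p := Real.log_pow _ _
          _ = ((m : ℝ) - 1) * Real.log p := by rw [hcast]
    refine tendsto_of_tendsto_of_tendsto_of_le_of_le'
      (htφ.mono_left inf_le_left) tendsto_const_nhds ?_ ?_
    · filter_upwards [hev] with p hp using (hbounds p hp).1
    · filter_upwards [hev] with p hp using (hbounds p hp).2
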